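/- Let N = 2n+ε and φ_N^ν = (νc + γ_{n+1})γ_{n+2}⋯γ_N for N = 2n+1 (ν = ±1) and φ_N^1 = γ_{n+1}γ_{n+2}⋯γ_N for N = 2n. Then γ_k φ_N^ν = 0 for all k > k' (i.e., k ≥ n+1+ε), and for N = 2n+1, γ_{n+1} φ_N^ν = νc φ_N^ν. -/

import Mathlib

noncomputable section

namespace FRT

/-- The "dual" index `i' = N+1-i` (0-indexed: `N-1-i`). -/
def dual {N : ℕ} (i : Fin N) : Fin N := ⟨N - 1 - i.val, by have := i.2; omega⟩

/-- Generators of the free algebra. -/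
def gen {N : ℕ} (i : Fin N) : FreeAlgebra ℂ (Fin N) := FreeAlgebra.ι ℂ i

/-- The sum `∑_{k<i} q^{2k-2i+2} γ_k γ_{k'}` appearing in the defining relations. -/
def pairSum (N : ℕ) (q : ℂ) (i : Fin N) : FreeAlgebra ℂ (Fin N) :=
  ∑ k ∈ Finset.Iio i, (q ^ (2 * (k.val : ℤ) - 2 * (i.val : ℤ) + 2)) • (gen k * gen (dual k))

/-- The defining relations of the FRT–Clifford algebra `Cl_N(q,c)`. -/
inductive Rel (N : ℕ) (q c : ℂ) : FreeAlgebra ℂ (Fin N) → FreeAlgebra ℂ (Fin N) → Prop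
  | sq (i : Fin N) (h : 2 * i.val + 1 ≠ N) : Rel N q c (gen i * gen i) 0
  | swap (i j : Fin N) (hlt : i < j) (h : i.val + j.val + 1 ≠ N) :
      Rel N q c (gen j * gen i) ((-(q ^ 2)) • (gen i * gen j))
  | pair (i : Fin N) (h : 2 * i.val + 1 < N) :
      Rel N q c (gen (dual i) * gen i)
        (-(gen i * gen (dual i)) + (q ^ 2 - q⁻¹ ^ 2) • pairSum N q i +
          algebraMap ℂ _ (c ^ 2 * q ^ ((N : ℤ) - 2 * (i.val : ℤ) - 1) * (q + q⁻¹)))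
  | middle (i : Fin N) (h : 2 * i.val + 1 = N) :
      Rel N q c (gen i * gen i) ((q - q⁻¹) • pairSum N q i + algebraMap ℂ _ (c ^ 2))

/-- The FRT–Clifford algebra `Cl_N(q,c)`. -/
abbrev Cl (N : ℕ) (q c : ℂ) := RingQuot (Rel N q c)

/-- The generators `γ_i` of `Cl_N(q,c)`. -/
def γ (N : ℕ) (q c : ℂ) (i : Fin N) : Cl N q c :=
  RingQuot.mkAlgHom ℂ (Rel N q c) (gen i)

/-- Ordered product `γ_1 γ_2 ⋯ γ_m` of the first `m` generators. -/
def prodFirst (N : ℕ) (q c : ℂ) (m : ℕ) : Cl N q c :=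
  (((List.finRange N).take m).map (γ N q c)).prod

/-- Ordered product `γ_{m+1} γ_{m+2} ⋯ γ_N` (0-indexed: indices `m,…,N-1`). -/
def prodFrom (N : ℕ) (q c : ℂ) (m : ℕ) : Cl N q c :=
  (((List.finRange N).drop m).map (γ N q c)).prod

/-- The ordered monomial `γ_1^{i_1} ⋯ γ_N^{i_N}` for `i ∈ {0,1}^N`. -/
def monoB (N : ℕ) (q c : ℂ) (f : Fin N → Bool) : Cl N q c :=
  ((List.finRange N).map (fun i => if f i then γ N q c i else 1)).prod

/-- The ordered monomial `γ_1^{i_1} ⋯ γ_n^{i_n}` for `i ∈ {0,1}^n`, `n ≤ N`. -/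
def monoLow (N : ℕ) (q c : ℂ) {n : ℕ} (h : n ≤ N) (f : Fin n → Bool) : Cl N q c :=
  ((List.finRange n).map (fun j => if f j then γ N q c (Fin.castLE h j) else 1)).prod

/-- `z` is homogeneous of `∂_i`-degree `0`: it is fixed by every algebra endomorphism
rescaling `γ_i` by `t` and `γ_{i'}` by `t⁻¹`. -/
def DegZeroAt (N : ℕ) (q c : ℂ) (i : ℕ) (z : Cl N q c) : Prop :=
  ∀ t : ℂ, t ≠ 0 → ∀ f : Cl N q c →ₐ[ℂ] Cl N q c,
    (∀ j : Fin N, f (γ N q c j) =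
      (if j.val = i then t else if j.val + i + 1 = N then t⁻¹ else 1) • γ N q c j) →
    f z = z

/-- `γ_k φ_N^ν = 0` for all `k > k'`, and for odd `N`,
`γ_{n+1} φ_N^ν = νc φ_N^ν`. -/
lemma gamma_sq (N : ℕ) (q c : ℂ) (i : Fin N) (h : 2 * i.val + 1 ≠ N) :
    γ N q c i * γ N q c i = 0 := by
  rw [γ, ← map_mul, RingQuot.mkAlgHom_rel ℂ (Rel.sq i h), map_zero]

lemma gamma_swap (N : ℕ) (q c : ℂ) (i j : Fin N) (hlt : i < j) (h : i.val + j.val + 1 ≠ N) :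
    γ N q c j * γ N q c i = (-(q ^ 2)) • (γ N q c i * γ N q c j) := by
  rw [γ, γ, ← map_mul, RingQuot.mkAlgHom_rel ℂ (Rel.swap i j hlt h), map_smul, map_mul]

lemma gamma_mul_prod_eq_zero (N : ℕ) (q c : ℂ) (m : ℕ) (h2 : N ≤ 2 * m)
    (l : List (Fin N)) (hp : l.Pairwise (· < ·)) (hm : ∀ j ∈ l, m ≤ j.val) :
    ∀ k ∈ l, γ N q c k * (l.map (γ N q c)).prod = 0 := by
  induction l with
  | nil => intro k hk; exact absurd hk List.not_mem_nil
  | cons a t ih =>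
    intro k hk
    rw [List.map_cons, List.prod_cons]
    rcases List.mem_cons.mp hk with rfl | hkt
    · rw [← mul_assoc, gamma_sq N q c k (by have := hm k List.mem_cons_self; omega),
        zero_mul]
    · have hak : a.val < k.val := (List.pairwise_cons.mp hp).1 k hkt
      have ham := hm a List.mem_cons_self
      have hkm := hm k (List.mem_cons_of_mem a hkt)
      rw [← mul_assoc, gamma_swap N q c a k (by exact hak) (by omega), smul_mul_assoc, mul_assoc,
        ih (List.pairwise_cons.mp hp).2 (fun j hj => hm j (List.mem_cons_of_mem a hj)) k hkt,
        mul_zero, smul_zero]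

lemma gamma_mul_prodFrom (N : ℕ) (q c : ℂ) (m : ℕ) (h2 : N ≤ 2 * m)
    (k : Fin N) (hk : m ≤ k.val) : γ N q c k * prodFrom N q c m = 0 := by
  apply gamma_mul_prod_eq_zero N q c m h2
  · exact List.Pairwise.sublist (List.drop_sublist m _) (List.pairwise_lt_finRange N)
  · intro j hj
    obtain ⟨i, hi, he⟩ := List.mem_iff_getElem.mp hj
    rw [List.getElem_drop] at he
    simp only [List.getElem_finRange] at he
    subst he; simp
  · rw [List.mem_iff_getElem]
    have hlen : ((List.finRange N).drop m).length = N - m := by simp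
    refine ⟨k.val - m, by omega, ?_⟩
    rw [List.getElem_drop]
    simp only [List.getElem_finRange]
    ext; simp; omega

lemma pairSum_image (N : ℕ) (q c : ℂ) (i : Fin N) :
    RingQuot.mkAlgHom ℂ (Rel N q c) (pairSum N q i) =
      ∑ k ∈ Finset.Iio i, (q ^ (2 * (k.val : ℤ) - 2 * (i.val : ℤ) + 2)) •
        (γ N q c k * γ N q c (dual k)) := by
  rw [pairSum, map_sum]
  refine Finset.sum_congr rfl fun k _ => ?_
  rw [map_smul, map_mul, γ, γ]

lemma mid_sq_mul (n : ℕ) (q c : ℂ) :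
    γ (2*n+1) q c ⟨n, by omega⟩ * (γ (2*n+1) q c ⟨n, by omega⟩ * prodFrom (2*n+1) q c (n+1)) =
      (c^2) • prodFrom (2*n+1) q c (n+1) := by
  rw [← mul_assoc]
  have hmid : γ (2*n+1) q c ⟨n, by omega⟩ * γ (2*n+1) q c ⟨n, by omega⟩ =
      (q - q⁻¹) • (RingQuot.mkAlgHom ℂ (Rel (2*n+1) q c) (pairSum (2*n+1) q ⟨n, by omega⟩)) +
        algebraMap ℂ _ (c^2) := by
    rw [γ, ← map_mul, RingQuot.mkAlgHom_rel ℂ (Rel.middle ⟨n, by omega⟩ rfl), map_add,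
      map_smul, AlgHom.commutes]
  rw [hmid, add_mul, smul_mul_assoc, pairSum_image, Finset.sum_mul]
  have hz : ∀ k ∈ Finset.Iio (⟨n, by omega⟩ : Fin (2*n+1)),
      (q ^ (2 * (k.val : ℤ) - 2 * (n : ℤ) + 2)) •
        (γ (2*n+1) q c k * γ (2*n+1) q c (dual k)) * prodFrom (2*n+1) q c (n+1) = 0 := by
    intro k hk
    have hkn : k.val < n := Fin.lt_def.mp (Finset.mem_Iio.mp hk)
    rw [smul_mul_assoc, mul_assoc,
      gamma_mul_prodFrom (2*n+1) q c (n+1) (by omega) (dual k) (by simp [dual]; omega),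
      mul_zero, smul_zero]
  rw [Finset.sum_congr rfl hz, Finset.sum_const, smul_zero, smul_zero, zero_add,
    ← Algebra.smul_def]


theorem gamma_mul_phi (n : ℕ) (hn : 2 ≤ n) (q c : ℂ)
    (hq : q ≠ 0) (hqr : ∀ m : ℕ, 0 < m → q ^ m ≠ 1) (hc : c ≠ 0) :
    (∀ k : Fin (2 * n), 2 * n < 2 * k.val + 1 →
      γ (2 * n) q c k * prodFrom (2 * n) q c n = 0) ∧
    (∀ ν : ℂ, ν = 1 ∨ ν = -1 →
      (∀ k : Fin (2 * n + 1), 2 * n + 1 < 2 * k.val + 1 →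
        γ (2 * n + 1) q c k *
          ((algebraMap ℂ (Cl (2 * n + 1) q c) (ν * c) + γ (2 * n + 1) q c ⟨n, by omega⟩) *
            prodFrom (2 * n + 1) q c (n + 1)) = 0) ∧
      γ (2 * n + 1) q c ⟨n, by omega⟩ *
          ((algebraMap ℂ (Cl (2 * n + 1) q c) (ν * c) + γ (2 * n + 1) q c ⟨n, by omega⟩) *
            prodFrom (2 * n + 1) q c (n + 1)) =
        (ν * c) •
          ((algebraMap ℂ (Cl (2 * n + 1) q c) (ν * c) + γ (2 * n + 1) q c ⟨n, by omega⟩) *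
            prodFrom (2 * n + 1) q c (n + 1))) := by
  constructor
  · intro k hk
    exact gamma_mul_prodFrom (2*n) q c n (by omega) k (by omega)
  · intro ν hν
    set φ := prodFrom (2*n+1) q c (n+1) with hφ
    have hγφ : ∀ k : Fin (2*n+1), n + 1 ≤ k.val → γ (2*n+1) q c k * φ = 0 :=
      fun k hk => gamma_mul_prodFrom (2*n+1) q c (n+1) (by omega) k hk
    constructor
    · intro k hk
      have hk' : n + 1 ≤ k.val := by omega
      rw [add_mul, mul_add, ← Algebra.smul_def, mul_smul_comm, hγφ k hk', smul_zero, zero_add,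
        ← mul_assoc, gamma_swap (2*n+1) q c ⟨n, by omega⟩ k (by show n < k.val; omega)
          (by show n + k.val + 1 ≠ 2*n+1; omega), smul_mul_assoc, mul_assoc, hγφ k hk', mul_zero, smul_zero]
    · have hν2 : ν * ν = 1 := by rcases hν with rfl | rfl <;> ring
      rw [add_mul, mul_add, mid_sq_mul n q c, ← Algebra.smul_def, mul_smul_comm, smul_add,
        smul_smul]
      have h2 : ν * c * (ν * c) = c ^ 2 := by
        rw [mul_mul_mul_comm, hν2, one_mul]; ring
      rw [h2]; exact add_comm _ _


end FRT
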